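/- Let 𝒯 ⊆ ([n] choose 3) be an intersecting family with covering number τ(𝒯) = 3 (i.e., no 2-element set meets all members). If for some pair {x,y} at most one member of 𝒯 avoids both x and y, then some element v satisfies: the number of members of 𝒯 avoiding v is at most 4. -/
import Mathlib

open Finset

private lemma helper5 {n : ℕ} (T : Finset (Finset (Fin n)))
    (huniform : ∀ A ∈ T, A.card = 3)
    (hint : ∀ A ∈ T, ∀ B ∈ T, (A ∩ B).Nonempty)
    (hτ : ∀ S : Finset (Fin n), S.card ≤ 2 → ∃ A ∈ T, A ∩ S = ∅)
    (A₀ : Finset (Fin n)) (hA₀T : A₀ ∈ T)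
    (u v m : Fin n) (hu₀ : u ∉ A₀) (hv₀ : v ∉ A₀) (hm : m ∈ A₀)
    (huniq : ∀ C ∈ T, u ∉ C → v ∉ C → C = A₀)
    (A B : Finset (Fin n)) (hA : A ∈ T) (hB : B ∈ T) (hAB : A ≠ B)
    (huA : u ∈ A) (huB : u ∈ B) (hvA : v ∉ A) (hvB : v ∉ B)
    (hiA : A ∩ A₀ = {m}) (hiB : B ∩ A₀ = {m}) : False := by
  obtain ⟨D, hD, hDum⟩ := hτ {u, m} (le_trans (card_insert_le _ _) (by simp))
  have huD : u ∉ D := fun h => by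
    have : u ∈ D ∩ {u, m} := mem_inter.mpr ⟨h, by simp⟩
    simp [hDum] at this
  have hmD : m ∉ D := fun h => by
    have : m ∈ D ∩ {u, m} := mem_inter.mpr ⟨h, by simp⟩
    simp [hDum] at this
  have hDne : D ≠ A₀ := fun h => hmD (h ▸ hm)
  have hvD : v ∈ D := by
    by_contra h
    exact hDne (huniq D hD huD h)
  obtain ⟨w, hw⟩ := hint D hD A hA
  obtain ⟨w', hw'⟩ := hint D hD B hB
  have hwD : w ∈ D := (mem_inter.mp hw).1
  have hwA : w ∈ A := (mem_inter.mp hw).2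
  have hw'D : w' ∈ D := (mem_inter.mp hw').1
  have hw'B : w' ∈ B := (mem_inter.mp hw').2
  have hmA : m ∈ A := mem_of_mem_inter_left (show m ∈ A ∩ A₀ by
    rw [hiA]; exact mem_singleton_self m)
  have hmB : m ∈ B := mem_of_mem_inter_left (show m ∈ B ∩ A₀ by
    rw [hiB]; exact mem_singleton_self m)
  have hwA₀ : w ∉ A₀ := by
    intro h
    have h2 : w ∈ A ∩ A₀ := mem_inter.mpr ⟨hwA, h⟩
    rw [hiA, mem_singleton] at h2
    exact hmD (h2 ▸ hwD)
  have hw'A₀ : w' ∉ A₀ := by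
    intro h
    have h2 : w' ∈ B ∩ A₀ := mem_inter.mpr ⟨hw'B, h⟩
    rw [hiB, mem_singleton] at h2
    exact hmD (h2 ▸ hw'D)
  have hww' : w ≠ w' := by
    intro h
    subst h
    have hsub : ({u, m, w} : Finset (Fin n)) ⊆ A ∩ B := by
      intro t ht
      simp only [mem_insert, mem_singleton] at ht
      rcases ht with rfl | rfl | rfl
      · exact mem_inter.mpr ⟨huA, huB⟩
      · exact mem_inter.mpr ⟨hmA, hmB⟩
      · exact mem_inter.mpr ⟨hwA, hw'B⟩
    have hum : u ≠ m := fun h => hu₀ (h ▸ hm)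
    have huw : u ≠ w := fun h => huD (h ▸ hwD)
    have hmw : m ≠ w := fun h => hmD (h ▸ hwD)
    have hcd : ({u, m, w} : Finset (Fin n)).card = 3 := by
      rw [card_insert_of_notMem (by simp [hum, huw]),
        card_insert_of_notMem (by simp [hmw]), card_singleton]
    have h1 : 3 ≤ (A ∩ B).card := hcd ▸ card_le_card hsub
    have h2 : A ∩ B = A :=
      eq_of_subset_of_card_le inter_subset_left (by rw [huniform A hA]; omega)
    have h3 : A ⊆ B := by
      intro t ht
      rw [← h2] at ht
      exact (mem_inter.mp ht).2
    exact hAB (eq_of_subset_of_card_le h3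
      (by rw [huniform A hA, huniform B hB]))
  have hwv : w ≠ v := fun h => hvA (h ▸ hwA)
  have hw'v : w' ≠ v := fun h => hvB (h ▸ hw'B)
  have hsub : ({v, w, w'} : Finset (Fin n)) ⊆ D := by
    intro t ht
    simp only [mem_insert, mem_singleton] at ht
    rcases ht with rfl | rfl | rfl
    · exact hvD
    · exact hwD
    · exact hw'D
  have hcd : ({v, w, w'} : Finset (Fin n)).card = 3 := by
    rw [card_insert_of_notMem (by simp [hwv.symm, hw'v.symm]),
      card_insert_of_notMem (by simp [hww']), card_singleton]
  have hDeq : ({v, w, w'} : Finset (Fin n)) = D :=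
    eq_of_subset_of_card_le hsub (by rw [huniform D hD, hcd])
  obtain ⟨t, ht⟩ := hint D hD A₀ hA₀T
  have htD := (mem_inter.mp ht).1
  have htA₀ := (mem_inter.mp ht).2
  rw [← hDeq] at htD
  simp only [mem_insert, mem_singleton] at htD
  rcases htD with rfl | rfl | rfl
  · exact hv₀ htA₀
  · exact hwA₀ htA₀
  · exact hw'A₀ htA₀

theorem stmt_5 (n : ℕ) (T : Finset (Finset (Fin n)))
    (huniform : ∀ A ∈ T, A.card = 3)
    (hint : ∀ A ∈ T, ∀ B ∈ T, (A ∩ B).Nonempty)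
    (hτ : ∀ S : Finset (Fin n), S.card ≤ 2 → ∃ A ∈ T, A ∩ S = ∅)
    (hxy : ∃ x y : Fin n, x ≠ y ∧ (T.filter (fun A => x ∉ A ∧ y ∉ A)).card ≤ 1) :
    ∃ v : Fin n, (T.filter (fun A => v ∉ A)).card ≤ 4 := by
  by_contra hcon
  push_neg at hcon
  obtain ⟨x, y, hxyne, hxy1⟩ := hxy
  obtain ⟨A₀, hA₀T, hA₀xy⟩ := hτ {x, y} (le_trans (card_insert_le _ _) (by simp))
  have hxA₀ : x ∉ A₀ := fun h => by
    have : x ∈ A₀ ∩ {x, y} := mem_inter.mpr ⟨h, by simp⟩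
    simp [hA₀xy] at this
  have hyA₀ : y ∉ A₀ := fun h => by
    have : y ∈ A₀ ∩ {x, y} := mem_inter.mpr ⟨h, by simp⟩
    simp [hA₀xy] at this
  have huniq : ∀ C ∈ T, x ∉ C → y ∉ C → C = A₀ := by
    intro C hC hxC hyC
    have h1 : C ∈ T.filter (fun A => x ∉ A ∧ y ∉ A) :=
      mem_filter.mpr ⟨hC, hxC, hyC⟩
    have h2 : A₀ ∈ T.filter (fun A => x ∉ A ∧ y ∉ A) :=
      mem_filter.mpr ⟨hA₀T, hxA₀, hyA₀⟩
    exact card_le_one.mp hxy1 C h1 A₀ h2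
  have huniq' : ∀ C ∈ T, y ∉ C → x ∉ C → C = A₀ := fun C hC h1 h2 => huniq C hC h2 h1
  have hA₀3 : A₀.card = 3 := huniform _ hA₀T
  set Fx := T.filter (fun A => x ∉ A) with hFx
  set Fy := T.filter (fun A => y ∉ A) with hFy
  have hA₀Fx : A₀ ∈ Fx := mem_filter.mpr ⟨hA₀T, hxA₀⟩
  have hA₀Fy : A₀ ∈ Fy := mem_filter.mpr ⟨hA₀T, hyA₀⟩
  have h5x : 4 < Fx.card := hcon x
  have h5y : 4 < Fy.card := hcon y
  have hUx : 4 ≤ (Fx.erase A₀).card := by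
    rw [card_erase_of_mem hA₀Fx]; omega
  have hUy : 4 ≤ (Fy.erase A₀).card := by
    rw [card_erase_of_mem hA₀Fy]; omega
  have hdisj : Disjoint (Fx.erase A₀) (Fy.erase A₀) := by
    rw [Finset.disjoint_left]
    intro A h1 h2
    have e1 := mem_erase.mp h1
    have e2 := mem_erase.mp h2
    have f1 := mem_filter.mp e1.2
    have f2 := mem_filter.mp e2.2
    exact e1.1 (huniq A f1.1 f1.2 f2.2)
  set U := (Fx.erase A₀) ∪ (Fy.erase A₀) with hU
  have hU8 : 8 ≤ U.card := by
    rw [hU, card_union_of_disjoint hdisj]; omega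
  have key : ∀ A ∈ U, A ∈ T ∧ A ≠ A₀ ∧ ((x ∈ A ∧ y ∉ A) ∨ (x ∉ A ∧ y ∈ A)) := by
    intro A hAU
    rcases mem_union.mp hAU with h | h
    · have e := mem_erase.mp h
      have f := mem_filter.mp e.2
      refine ⟨f.1, e.1, Or.inr ⟨f.2, ?_⟩⟩
      by_contra hy
      exact e.1 (huniq A f.1 f.2 hy)
    · have e := mem_erase.mp h
      have f := mem_filter.mp e.2
      refine ⟨f.1, e.1, Or.inl ⟨?_, f.2⟩⟩
      by_contra hx
      exact e.1 (huniq A f.1 hx f.2)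
  have keyc : ∀ A ∈ U, (A ∩ A₀).card = 1 ∨ (A ∩ A₀).card = 2 := by
    intro A hAU
    obtain ⟨hAT, hAne, -⟩ := key A hAU
    have h1 : (A ∩ A₀).Nonempty := hint A hAT A₀ hA₀T
    have h2 : (A ∩ A₀).card ≤ 3 := hA₀3 ▸ card_le_card inter_subset_right
    have h3 : (A ∩ A₀).card ≠ 3 := by
      intro h
      have h4 : A ∩ A₀ = A₀ :=
        eq_of_subset_of_card_le inter_subset_right (by omega)
      have h5 : A₀ ⊆ A := by
        intro t ht
        rw [← h4] at ht
        exact (mem_inter.mp ht).1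
      exact hAne ((eq_of_subset_of_card_le h5
        (by rw [huniform A hAT, hA₀3])).symm)
    have h0 : 1 ≤ (A ∩ A₀).card := card_pos.mpr h1
    omega
  set ψ : Finset (Fin n) → Finset (Fin n) × Bool := fun A =>
    (if (A ∩ A₀).card = 1 then A ∩ A₀ else A₀ \ A,
      decide (x ∈ A) == decide ((A ∩ A₀).card = 1)) with hψ
  have hsd : ∀ A ∈ U, (A ∩ A₀).card = 2 → (A₀ \ A).card = 1 := by
    intro A hAU h2
    have := card_inter_add_card_sdiff A₀ A
    rw [inter_comm A₀ A, h2, hA₀3] at this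
    omega
  have himg : ∀ A ∈ U, ψ A ∈
      (A₀.image fun m => ({m} : Finset (Fin n))) ×ˢ (Finset.univ : Finset Bool) := by
    intro A hAU
    rw [mem_product]
    refine ⟨?_, mem_univ _⟩
    rcases keyc A hAU with h1 | h2
    · obtain ⟨m, hm⟩ := card_eq_one.mp h1
      have hmA₀ : m ∈ A₀ := by
        have : m ∈ A ∩ A₀ := by rw [hm]; exact mem_singleton_self m
        exact (mem_inter.mp this).2
      simp only [hψ, if_pos h1]
      exact mem_image.mpr ⟨m, hmA₀, hm.symm⟩
    · obtain ⟨m, hm⟩ := card_eq_one.mp (hsd A hAU h2)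
      have hmA₀ : m ∈ A₀ := by
        have : m ∈ A₀ \ A := by rw [hm]; exact mem_singleton_self m
        exact (mem_sdiff.mp this).1
      simp only [hψ, if_neg (by omega : ¬ (A ∩ A₀).card = 1)]
      exact mem_image.mpr ⟨m, hmA₀, hm.symm⟩
  have hinj : Set.InjOn ψ U := by
    intro A hAU B hBU hψeq
    by_contra hne
    obtain ⟨hAT, hAne, hAxy⟩ := key A hAU
    obtain ⟨hBT, hBne, hBxy⟩ := key B hBU
    have h1 := congrArg Prod.fst hψeq
    have h2 := congrArg Prod.snd hψeq
    simp only [hψ] at h1 h2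
    -- structure lemma for card-2 members
    have hstruct : ∀ C, C ∈ T → (C ∩ A₀).card = 2 → ∀ u : Fin n, u ∈ C → u ∉ A₀ →
        C = insert u (C ∩ A₀) := by
      intro C hCT hC2 u huC hu₀
      have hsub : insert u (C ∩ A₀) ⊆ C := by
        intro t ht
        rcases mem_insert.mp ht with rfl | ht'
        · exact huC
        · exact (mem_inter.mp ht').1
      have hcd : (insert u (C ∩ A₀)).card = 3 := by
        rw [card_insert_of_notMem (fun h => hu₀ (mem_inter.mp h).2), hC2]
      exact (eq_of_subset_of_card_le hsub (by rw [huniform C hCT, hcd])).symm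
    rcases keyc A hAU with hcA | hcA <;> rcases keyc B hBU with hcB | hcB
    · -- both pure
      rw [if_pos hcA, if_pos hcB] at h1
      rcases hAxy with ⟨hxA, hyA⟩ | ⟨hxA, hyA⟩ <;>
        rcases hBxy with ⟨hxB, hyB⟩ | ⟨hxB, hyB⟩
      · obtain ⟨m, hm⟩ := card_eq_one.mp hcA
        have hmA₀ : m ∈ A₀ := by
          have : m ∈ A ∩ A₀ := by rw [hm]; exact mem_singleton_self m
          exact (mem_inter.mp this).2
        exact helper5 T huniform hint hτ A₀ hA₀T x y m hxA₀ hyA₀ hmA₀ huniq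
          A B hAT hBT hne hxA hxB hyA hyB hm (by rw [← h1]; exact hm)
      · simp [hcA, hcB, hxA, hxB] at h2
      · simp [hcA, hcB, hxA, hxB] at h2
      · obtain ⟨m, hm⟩ := card_eq_one.mp hcA
        have hmA₀ : m ∈ A₀ := by
          have : m ∈ A ∩ A₀ := by rw [hm]; exact mem_singleton_self m
          exact (mem_inter.mp this).2
        exact helper5 T huniform hint hτ A₀ hA₀T y x m hyA₀ hxA₀ hmA₀ huniq'
          A B hAT hBT hne hyA hyB hxA hxB hm (by rw [← h1]; exact hm)
    · -- A pure, B saturated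
      rw [if_pos hcA, if_neg (by omega : ¬ (B ∩ A₀).card = 1)] at h1
      rcases hAxy with ⟨hxA, hyA⟩ | ⟨hxA, hyA⟩ <;>
        rcases hBxy with ⟨hxB, hyB⟩ | ⟨hxB, hyB⟩
      · simp [hcA, hcB, hxA, hxB] at h2
      · -- x ∈ A, y ∈ B
        have hBeq := hstruct B hBT hcB y hyB hyA₀
        obtain ⟨w, hw⟩ := hint A hAT B hBT
        have hwA := (mem_inter.mp hw).1
        have hwB := (mem_inter.mp hw).2
        rw [hBeq] at hwB
        rcases mem_insert.mp hwB with rfl | hw'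
        · exact hyA hwA
        · have : w ∈ A ∩ A₀ := mem_inter.mpr ⟨hwA, (mem_inter.mp hw').2⟩
          rw [h1] at this
          exact (mem_sdiff.mp this).2 (mem_inter.mp hw').1
      · -- y ∈ A, x ∈ B
        have hBeq := hstruct B hBT hcB x hxB hxA₀
        obtain ⟨w, hw⟩ := hint A hAT B hBT
        have hwA := (mem_inter.mp hw).1
        have hwB := (mem_inter.mp hw).2
        rw [hBeq] at hwB
        rcases mem_insert.mp hwB with rfl | hw'
        · exact hxA hwA
        · have : w ∈ A ∩ A₀ := mem_inter.mpr ⟨hwA, (mem_inter.mp hw').2⟩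
          rw [h1] at this
          exact (mem_sdiff.mp this).2 (mem_inter.mp hw').1
      · simp [hcA, hcB, hxA, hxB] at h2
    · -- A saturated, B pure
      rw [if_neg (by omega : ¬ (A ∩ A₀).card = 1), if_pos hcB] at h1
      rcases hAxy with ⟨hxA, hyA⟩ | ⟨hxA, hyA⟩ <;>
        rcases hBxy with ⟨hxB, hyB⟩ | ⟨hxB, hyB⟩
      · simp [hcA, hcB, hxA, hxB] at h2
      · -- x ∈ A (sat), y ∈ B (pure)
        have hAeq := hstruct A hAT hcA x hxA hxA₀
        obtain ⟨w, hw⟩ := hint A hAT B hBT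
        have hwA := (mem_inter.mp hw).1
        have hwB := (mem_inter.mp hw).2
        rw [hAeq] at hwA
        rcases mem_insert.mp hwA with rfl | hw'
        · exact hxB hwB
        · have : w ∈ B ∩ A₀ := mem_inter.mpr ⟨hwB, (mem_inter.mp hw').2⟩
          rw [← h1] at this
          exact (mem_sdiff.mp this).2 (mem_inter.mp hw').1
      · -- y ∈ A (sat), x ∈ B (pure)
        have hAeq := hstruct A hAT hcA y hyA hyA₀
        obtain ⟨w, hw⟩ := hint A hAT B hBT
        have hwA := (mem_inter.mp hw).1
        have hwB := (mem_inter.mp hw).2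
        rw [hAeq] at hwA
        rcases mem_insert.mp hwA with rfl | hw'
        · exact hyB hwB
        · have : w ∈ B ∩ A₀ := mem_inter.mpr ⟨hwB, (mem_inter.mp hw').2⟩
          rw [← h1] at this
          exact (mem_sdiff.mp this).2 (mem_inter.mp hw').1
      · simp [hcA, hcB, hxA, hxB] at h2
    · -- both saturated
      rw [if_neg (by omega : ¬ (A ∩ A₀).card = 1),
        if_neg (by omega : ¬ (B ∩ A₀).card = 1)] at h1
      have hinter : A ∩ A₀ = B ∩ A₀ := by
        have e : A₀ \ (A₀ \ A) = A₀ \ (A₀ \ B) := by rw [h1]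
        rw [sdiff_sdiff_self_left, sdiff_sdiff_self_left] at e
        rw [inter_comm A A₀, inter_comm B A₀, e]
      rcases hAxy with ⟨hxA, hyA⟩ | ⟨hxA, hyA⟩ <;>
        rcases hBxy with ⟨hxB, hyB⟩ | ⟨hxB, hyB⟩
      · have hAeq := hstruct A hAT hcA x hxA hxA₀
        have hBeq := hstruct B hBT hcB x hxB hxA₀
        exact hne (by rw [hAeq, hBeq, hinter])
      · simp [hcA, hcB, hxA, hxB] at h2
      · simp [hcA, hcB, hxA, hxB] at h2
      · have hAeq := hstruct A hAT hcA y hyA hyA₀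
        have hBeq := hstruct B hBT hcB y hyB hyA₀
        exact hne (by rw [hAeq, hBeq, hinter])
  have hle := card_le_card_of_injOn ψ himg hinj
  rw [card_product, card_image_of_injective _ Finset.singleton_injective,
    hA₀3, card_univ] at hle
  simp at hle
  omega
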